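/- A permutation w ∈ S_n is 132-avoiding and 231-avoiding if and only if its code (c_1,…,c_n) is a strict partition, i.e., c_1 > c_2 > ⋯ > c_k = c_{k+1} = ⋯ = c_n = 0 for some k. -/

import Mathlib

/-- The code of a permutation: `c_i(w) = #{j > i : w_j < w_i}`. -/
def code {n : ℕ} (w : Equiv.Perm (Fin n)) (i : Fin n) : ℕ :=
  (Finset.univ.filter fun j => i < j ∧ w j < w i).card

/-- `w` is 132-avoiding: no indices `i < j < k` with `w i < w k < w j`. -/
def Avoids132 {n : ℕ} (w : Equiv.Perm (Fin n)) : Prop :=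
  ¬ ∃ i j k : Fin n, i < j ∧ j < k ∧ w i < w k ∧ w k < w j

/-- `w` is 231-avoiding: no indices `i < j < k` with `w k < w i < w j`. -/
def Avoids231 {n : ℕ} (w : Equiv.Perm (Fin n)) : Prop :=
  ¬ ∃ i j k : Fin n, i < j ∧ j < k ∧ w k < w i ∧ w i < w j

lemma code_ne_zero_iff {n : ℕ} (w : Equiv.Perm (Fin n)) (j : Fin n) :
    code w j ≠ 0 ↔ ∃ t, j < t ∧ w t < w j := by
  rw [code, Ne, Finset.card_eq_zero, ← Ne, ← Finset.nonempty_iff_ne_empty]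
  simp [Finset.filter_nonempty_iff]

lemma key {n : ℕ} {w : Equiv.Perm (Fin n)} (h132 : Avoids132 w) (h231 : Avoids231 w)
    {i j : Fin n} (hij : i < j) (hj : code w j ≠ 0) : code w j + 1 ≤ code w i := by
  obtain ⟨k, hjk, hwk⟩ := (code_ne_zero_iff w j).mp hj
  have hwji : w j < w i := by
    rcases lt_trichotomy (w i) (w j) with h | h | h
    · rcases lt_trichotomy (w i) (w k) with h2 | h2 | h2
      · exact absurd ⟨i, j, k, hij, hjk, h2, hwk⟩ h132
      · exact absurd (hij.trans hjk) (by rw [w.injective h2]; exact lt_irrefl k)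
      · exact absurd ⟨i, j, k, hij, hjk, h2, h⟩ h231
    · exact absurd hij (by rw [w.injective h]; exact lt_irrefl j)
    · exact h
  have hsub : insert j (Finset.univ.filter fun t => j < t ∧ w t < w j)
      ⊆ Finset.univ.filter fun t => i < t ∧ w t < w i := by
    intro t ht
    simp only [Finset.mem_insert, Finset.mem_filter, Finset.mem_univ, true_and] at ht ⊢
    rcases ht with rfl | ⟨h1, h2⟩
    · exact ⟨hij, hwji⟩
    · exact ⟨hij.trans h1, h2.trans hwji⟩
  have hc := Finset.card_le_card hsub
  rwa [Finset.card_insert_of_notMem (by simp)] at hc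

lemma chain {n : ℕ} {w : Equiv.Perm (Fin n)} {K : ℕ}
    (hdec : ∀ i j : Fin n, (i : ℕ) < (j : ℕ) → (j : ℕ) ≤ K → code w j < code w i) :
    ∀ d (i j : Fin n), (i : ℕ) + d = (j : ℕ) → (j : ℕ) ≤ K → code w j + d ≤ code w i := by
  intro d
  induction d with
  | zero =>
    intro i j h hK
    have : i = j := Fin.ext (by omega)
    subst this; simp
  | succ d ih =>
    intro i j h hK
    have hjn : (j : ℕ) < n := j.isLt
    have hi1 : (i : ℕ) + 1 < n := by omega
    set i' : Fin n := ⟨(i : ℕ) + 1, hi1⟩ with hi'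
    have h1 : code w i' < code w i := hdec i i' (show (i : ℕ) < (i : ℕ) + 1 by omega) (show (i : ℕ) + 1 ≤ K by omega)
    have h2 := ih i' j (show (i : ℕ) + 1 + d = (j : ℕ) by omega) hK
    omega

lemma bound {n : ℕ} {w : Equiv.Perm (Fin n)} {i j : Fin n} (hij : i < j) (hw : w i < w j) :
    code w i ≤ code w j + ((j : ℕ) - (i : ℕ) - 1) := by
  have hsub : (Finset.univ.filter fun t => i < t ∧ w t < w i)
      ⊆ (Finset.univ.filter fun t => j < t ∧ w t < w j) ∪ Finset.Ioo i j := by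
    intro t ht
    simp only [Finset.mem_filter, Finset.mem_univ, true_and, Finset.mem_union,
      Finset.mem_Ioo] at ht ⊢
    obtain ⟨h1, h2⟩ := ht
    rcases lt_or_ge j t with h | h
    · exact Or.inl ⟨h, h2.trans hw⟩
    · refine Or.inr ⟨h1, lt_of_le_of_ne h ?_⟩
      rintro rfl
      exact absurd hw (not_lt.2 h2.le)
  calc code w i ≤ _ := Finset.card_le_card hsub
    _ ≤ code w j + (Finset.Ioo i j).card := Finset.card_union_le _ _
    _ = code w j + ((j : ℕ) - (i : ℕ) - 1) := by rw [Fin.card_Ioo]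

theorem stmt7 (n : ℕ) (hn : 1 ≤ n) (w : Equiv.Perm (Fin n)) :
    (Avoids132 w ∧ Avoids231 w) ↔
      ∃ k : ℕ, 1 ≤ k ∧ k ≤ n ∧
        (∀ i j : Fin n, (i : ℕ) < (j : ℕ) → (j : ℕ) ≤ k - 1 → code w j < code w i) ∧
        (∀ i : Fin n, k - 1 ≤ (i : ℕ) → code w i = 0) := by
  constructor
  · rintro ⟨h132, h231⟩
    set F : Finset (Fin n) := Finset.univ.filter (fun i => code w i = 0) with hF
    have hlast : (⟨n - 1, by omega⟩ : Fin n) ∈ F := by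
      simp only [hF, Finset.mem_filter, Finset.mem_univ, true_and]
      rw [code, Finset.card_eq_zero, Finset.filter_eq_empty_iff]
      rintro t -
      rintro ⟨h1, -⟩
      have := t.isLt
      have : (n : ℕ) - 1 < (t : ℕ) := h1
      omega
    have hne : F.Nonempty := ⟨_, hlast⟩
    set i₀ : Fin n := F.min' hne with hi₀
    have hi₀mem : i₀ ∈ F := F.min'_mem hne
    have hi₀zero : code w i₀ = 0 := by
      simpa [hF] using hi₀mem
    have hnotmem : ∀ i : Fin n, (i : ℕ) < (i₀ : ℕ) → code w i ≠ 0 := by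
      intro i hi hc
      have : i₀ ≤ i := F.min'_le i (by simp [hF, hc])
      omega
    refine ⟨(i₀ : ℕ) + 1, by omega, by have := i₀.isLt; omega, ?_, ?_⟩
    · intro i j hij hj
      simp only [Nat.add_sub_cancel] at hj
      rcases lt_or_eq_of_le hj with h | h
      · have hjne := hnotmem j h
        have := key h132 h231 (show i < j from hij) hjne
        omega
      · have hje : j = i₀ := Fin.ext h
        have hine := hnotmem i (by omega)
        rw [hje, hi₀zero]
        omega
    · intro i hi
      simp only [Nat.add_sub_cancel] at hi
      rcases lt_or_eq_of_le hi with h | h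
      · by_contra hc
        have := key h132 h231 (show i₀ < i from h) hc
        omega
      · have : i = i₀ := Fin.ext h.symm
        rw [this, hi₀zero]
  · rintro ⟨k, hk1, hkn, hdec, hzero⟩
    have main : ∀ i j t : Fin n, i < j → j < t → w i < w j → w t < w j → False := by
      intro i j t hij hjt hwij hwtj
      have hjne : code w j ≠ 0 := (code_ne_zero_iff w j).mpr ⟨t, hjt, hwtj⟩
      have hjle : (j : ℕ) ≤ k - 1 := by
        by_contra h
        exact hjne (hzero j (by omega))
      have h1 := chain hdec ((j : ℕ) - (i : ℕ)) i j (by omega) hjle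
      have h2 := bound hij hwij
      have : (i : ℕ) < (j : ℕ) := hij
      omega
    constructor
    · rintro ⟨i, j, t, hij, hjt, h1, h2⟩
      exact main i j t hij hjt (h1.trans h2) h2
    · rintro ⟨i, j, t, hij, hjt, h1, h2⟩
      exact main i j t hij hjt h2 (h1.trans h2)
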